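/- arXiv:2205.15354 — 3 statements merged into one kernel-verified Lean document; each statement's English description precedes it below -/
import Mathlib

section
/- Let ι be a finite index set with a distinguished root r and a parent map p : ι → ι such that p(r) = r and for every i ∈ ι there exists n ∈ ℕ with p^[n](i) = r (every element reaches the root under iteration of p). For i ≠ r let S_i = { j ∈ ι : j ≠ i and p^[n](j) = i for some n ≥ 1 } denote the set of strict descendants of i. Suppose σ : ι → ℝ takes only positive values and C : ι → ℝ satisfies, for every i ≠ r, the equation 0 = σ(p(i))·C(i) + (σ(p(i)) − σ(i))·Σ_{j ∈ S_i} C(j). Then C(i) = 0 for all i ≠ r. -/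
open scoped Classical

/-- Abstract form of the paper's result that the total charge on every inner
interface vanishes: for a finite tree of regions with root `r`, parent map `p`,
positive conductivities `σ`, and total charges `C` satisfying the integrated
boundary integral equations, `C i = 0` for every non-root region `i`. -/
theorem total_charge_vanishes_on_inner_interfaces
    {ι : Type*} [Fintype ι] (r : ι) (p : ι → ι)
    (hpr : p r = r) (hreach : ∀ i, ∃ n : ℕ, p^[n] i = r)
    (σ : ι → ℝ) (hσ : ∀ i, 0 < σ i) (C : ι → ℝ)
    (heq : ∀ i, i ≠ r →
      0 = σ (p i) * C i + (σ (p i) - σ i) *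
        ∑ j ∈ Finset.univ.filter (fun j => j ≠ i ∧ ∃ n : ℕ, 1 ≤ n ∧ p^[n] j = i), C j) :
    ∀ i, i ≠ r → C i = 0 := by
  have hfix : ∀ n, p^[n] r = r := fun n => Function.iterate_fixed hpr n
  have hnocycle : ∀ i, i ≠ r → ∀ k, 1 ≤ k → p^[k] i ≠ i := by
    intro i hi k hk hcyc
    obtain ⟨N, hN⟩ := hreach i
    have hcycm : ∀ m, p^[k * m] i = i := by
      intro m
      induction m with
      | zero => simp
      | succ m ih => rw [Nat.mul_succ, Function.iterate_add_apply, hcyc, ih]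
    have h1 : p^[k * N] i = i := hcycm N
    have hle : N ≤ k * N := Nat.le_mul_of_pos_left N hk
    have hsplit : k * N = (k * N - N) + N := by omega
    have h2 : p^[k * N] i = r := by
      rw [hsplit, Function.iterate_add_apply, hN, hfix]
    exact hi (h1 ▸ h2)
  set S : ι → Finset ι :=
    fun i => Finset.univ.filter (fun j => j ≠ i ∧ ∃ n : ℕ, 1 ≤ n ∧ p^[n] j = i) with hS
  have hmemS : ∀ i j, j ∈ S i ↔ (j ≠ i ∧ ∃ n : ℕ, 1 ≤ n ∧ p^[n] j = i) := by
    intro i j; simp [hS]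
  have key : ∀ n : ℕ, ∀ i, i ≠ r → (S i).card = n → C i = 0 := by
    intro n
    induction n using Nat.strong_induction_on with
    | _ n ih =>
      intro i hi hcard
      have hmem : ∀ j ∈ S i, j ≠ r ∧ (S j).card < n := by
        intro j hj
        obtain ⟨hji, a, ha1, ha2⟩ := (hmemS i j).mp hj
        have hjr : j ≠ r := by
          rintro rfl
          exact hi ((hfix a).symm.trans ha2).symm
        refine ⟨hjr, ?_⟩
        have hsub : S j ⊂ S i := by
          constructor
          · intro k hk
            obtain ⟨hkj, b, hb1, hb2⟩ := (hmemS j k).mp hk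
            have hki : k ≠ i := by
              rintro rfl
              have : p^[a + b] k = k := by
                rw [Function.iterate_add_apply, hb2, ha2]
              exact hnocycle k hi (a + b) (by omega) this
            exact (hmemS i k).mpr ⟨hki, a + b, by omega,
              by rw [Function.iterate_add_apply, hb2, ha2]⟩
          · intro hcon
            have : j ∈ S j := hcon hj
            exact ((hmemS j j).mp this).1 rfl
        have := Finset.card_lt_card hsub
        omega
      have hsum : ∑ j ∈ S i, C j = 0 :=
        Finset.sum_eq_zero fun j hj => ih _ (hmem j hj).2 j (hmem j hj).1 rfl
      have h := heq i hi
      rw [hsum, mul_zero, add_zero] at h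
      rcases mul_eq_zero.mp h.symm with h0 | h0
      · exact absurd h0 (hσ (p i)).ne'
      · exact h0
  intro i hi
  exact key (S i).card i hi rfl
end

section
/- Let s₁ < s₂ be real numbers, let q ∈ ℝ with q ≠ 0, and let γ₁, γ₂ ∈ ℝ. Set d = |q|, rᵢ = √(sᵢ² + q²) and θᵢ = arctan(sᵢ/d) for i = 1, 2, and let γ(s) = γ₁·(s₂ − s)/(s₂ − s₁) + γ₂·(s − s₁)/(s₂ − s₁). Then (1/(2π)) ∫_{s₁}^{s₂} log(√(s² + q²)) · γ(s) ds = (1/(2π)) · ((γ₁s₂ − γ₂s₁)/(s₂ − s₁)) · ( s₂·log r₂ − s₁·log r₁ − s₂ + s₁ + (θ₂ − θ₁)·d ) + (1/(2π)) · ((γ₂ − γ₁)/(s₂ − s₁)) · ( (r₂²/2)·(log r₂ − 1/2) − (r₁²/2)·(log r₁ − 1/2) ). -/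
open Real

/-- The paper's closed-form charge-line potential: the single layer potential at
the point `(0, q)` due to a linearly varying charge density on the segment from
`(s₁, 0)` to `(s₂, 0)`. -/
theorem charge_line_potential (s₁ s₂ q γ₁ γ₂ d r₁ r₂ θ₁ θ₂ : ℝ)
    (hs : s₁ < s₂) (hq : q ≠ 0)
    (hd : d = |q|)
    (hr₁ : r₁ = Real.sqrt (s₁ ^ 2 + q ^ 2)) (hr₂ : r₂ = Real.sqrt (s₂ ^ 2 + q ^ 2))
    (hθ₁ : θ₁ = Real.arctan (s₁ / d)) (hθ₂ : θ₂ = Real.arctan (s₂ / d)) :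
    (1 / (2 * π)) * ∫ s in s₁..s₂,
        Real.log (Real.sqrt (s ^ 2 + q ^ 2)) *
          (γ₁ * (s₂ - s) / (s₂ - s₁) + γ₂ * (s - s₁) / (s₂ - s₁))
      = (1 / (2 * π)) * ((γ₁ * s₂ - γ₂ * s₁) / (s₂ - s₁)) *
          (s₂ * Real.log r₂ - s₁ * Real.log r₁ - s₂ + s₁ + (θ₂ - θ₁) * d)
        + (1 / (2 * π)) * ((γ₂ - γ₁) / (s₂ - s₁)) *
          ((r₂ ^ 2 / 2) * (Real.log r₂ - 1 / 2) - (r₁ ^ 2 / 2) * (Real.log r₁ - 1 / 2)) := by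
  have hq2 : ∀ s : ℝ, 0 < s ^ 2 + q ^ 2 := fun s => by positivity
  have hd0 : d ≠ 0 := by rw [hd]; exact abs_ne_zero.mpr hq
  have hd2 : d ^ 2 = q ^ 2 := by rw [hd, sq_abs]
  have hs12 : s₂ - s₁ ≠ 0 := sub_ne_zero.mpr hs.ne'
  set a := (γ₁ * s₂ - γ₂ * s₁) / (s₂ - s₁) with ha
  set b := (γ₂ - γ₁) / (s₂ - s₁) with hb
  set F : ℝ → ℝ := fun s =>
    a * (s * Real.log (s ^ 2 + q ^ 2) / 2 - s + d * Real.arctan (s / d)) +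
    b * ((s ^ 2 + q ^ 2) / 2 * (Real.log (s ^ 2 + q ^ 2) / 2 - 1 / 2)) with hF
  have hderiv : ∀ x : ℝ, HasDerivAt F
      (Real.log (Real.sqrt (x ^ 2 + q ^ 2)) *
        (γ₁ * (s₂ - x) / (s₂ - s₁) + γ₂ * (x - s₁) / (s₂ - s₁))) x := by
    intro x
    have hx : x ^ 2 + q ^ 2 ≠ 0 := (hq2 x).ne'
    have h1 : HasDerivAt (fun s : ℝ => s ^ 2 + q ^ 2) (2 * x) x := by
      simpa using ((hasDerivAt_pow 2 x).add_const (q ^ 2))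
    have hlog : HasDerivAt (fun s : ℝ => Real.log (s ^ 2 + q ^ 2))
        (2 * x / (x ^ 2 + q ^ 2)) x := h1.log hx
    have harctan : HasDerivAt (fun s : ℝ => d * Real.arctan (s / d))
        (q ^ 2 / (x ^ 2 + q ^ 2)) x := by
      have h := ((Real.hasDerivAt_arctan (x / d)).comp x
        ((hasDerivAt_id x).div_const d)).const_mul d
      refine h.congr_deriv ?_
      have h2 : (1 : ℝ) + (x / d) ^ 2 ≠ 0 := by positivity
      field_simp
      simp only [← hd2]
      ring
    have hA : HasDerivAt (fun s : ℝ =>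
        s * Real.log (s ^ 2 + q ^ 2) / 2 - s + d * Real.arctan (s / d))
        ((1 * Real.log (x ^ 2 + q ^ 2) + x * (2 * x / (x ^ 2 + q ^ 2))) / 2 - 1
          + q ^ 2 / (x ^ 2 + q ^ 2)) x :=
      ((((hasDerivAt_id x).mul hlog).div_const 2).sub (hasDerivAt_id x)).add harctan
    have hB : HasDerivAt (fun s : ℝ =>
        (s ^ 2 + q ^ 2) / 2 * (Real.log (s ^ 2 + q ^ 2) / 2 - 1 / 2))
        (2 * x / 2 * (Real.log (x ^ 2 + q ^ 2) / 2 - 1 / 2)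
          + (x ^ 2 + q ^ 2) / 2 * (2 * x / (x ^ 2 + q ^ 2) / 2)) x :=
      (h1.div_const 2).mul ((hlog.div_const 2).sub_const (1 / 2))
    have hFd := (hA.const_mul a).add (hB.const_mul b)
    refine hFd.congr_deriv ?_
    rw [Real.log_sqrt (le_of_lt (hq2 x)), ha, hb]
    field_simp
    ring
  have hcont : Continuous fun s : ℝ =>
      Real.log (Real.sqrt (s ^ 2 + q ^ 2)) *
        (γ₁ * (s₂ - s) / (s₂ - s₁) + γ₂ * (s - s₁) / (s₂ - s₁)) := by
    apply Continuous.mul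
    · apply Continuous.log
      · exact ((continuous_pow 2).add continuous_const).sqrt
      · intro x
        have := hq2 x
        positivity
    · fun_prop
  have hint := intervalIntegral.integral_eq_sub_of_hasDerivAt
    (fun x _ => hderiv x) (hcont.intervalIntegrable s₁ s₂)
  rw [hint, hF]
  rw [hr₁, hr₂, hθ₁, hθ₂, Real.log_sqrt (le_of_lt (hq2 s₁)),
    Real.log_sqrt (le_of_lt (hq2 s₂)), Real.sq_sqrt (le_of_lt (hq2 s₁)),
    Real.sq_sqrt (le_of_lt (hq2 s₂)), ha, hb]
  field_simp
  ring
end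

section
/- Let u, w : ℝ² → ℝ be twice continuously differentiable and let T : ℝ² → ℝ² be continuously differentiable with compact support. Then ∫_{ℝ²} ⟨∇(x ↦ ⟨T(x), ∇u(x)⟩), ∇w⟩ dx + ∫_{ℝ²} ⟨∇u, ∇(x ↦ ⟨T(x), ∇w(x)⟩)⟩ dx = ∫_{ℝ²} [ ⟨DT(x)(∇u(x)), ∇w(x)⟩ + ⟨DT(x)(∇w(x)), ∇u(x)⟩ − (div T)(x)·⟨∇u(x), ∇w(x)⟩ ] dx, where DT(x) denotes the total (Fréchet) derivative of T at x, div T = trace(DT), ∇ is the gradient, and ⟨·,·⟩ is the Euclidean inner product on ℝ². -/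
open MeasureTheory
open scoped RealInnerProductSpace

namespace TangentialIBPAux

open InnerProductSpace Function

local notation "E2" => EuclideanSpace ℝ (Fin 2)

lemma inner_gradient (f : E2 → ℝ) (x v : E2) : ⟪gradient f x, v⟫ = fderiv ℝ f x v :=
  toDual_symm_apply

lemma continuous_gradient {f : E2 → ℝ} (hf : ContDiff ℝ 1 f) : Continuous (gradient f) :=
  (LinearIsometryEquiv.continuous _).comp
    (hf.fderiv_right (m := 0) (by norm_num)).continuous

lemma contDiff_gradient {f : E2 → ℝ} (hf : ContDiff ℝ 2 f) : ContDiff ℝ 1 (gradient f) :=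
  ((toDual ℝ (EuclideanSpace ℝ (Fin 2))).symm.toContinuousLinearEquiv.contDiff).comp
    (hf.fderiv_right (by norm_num))

lemma inner_fderiv_gradient {f : E2 → ℝ} (x v a : E2) :
    ⟪fderiv ℝ (gradient f) x v, a⟫ = fderiv ℝ (fderiv ℝ f) x v a := by
  have h : gradient f = ⇑(toDual ℝ (EuclideanSpace ℝ (Fin 2))).symm ∘ fderiv ℝ f := rfl
  rw [h, LinearIsometryEquiv.comp_fderiv]
  exact toDual_symm_apply

lemma symm_second {f : E2 → ℝ} (hf : ContDiff ℝ 2 f) (x v a : E2) :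
    ⟪fderiv ℝ (gradient f) x v, a⟫ = ⟪fderiv ℝ (gradient f) x a, v⟫ := by
  rw [inner_fderiv_gradient, inner_fderiv_gradient]
  exact hf.contDiffAt.isSymmSndFDerivAt (by simp [minSmoothness_of_isRCLikeNormedField]) v a

lemma clm_apply_eq_sum (f : E2 →L[ℝ] ℝ) (y : E2) :
    f y = ∑ i, y i * f (EuclideanSpace.single i 1) := by
  conv_lhs => rw [← (EuclideanSpace.basisFun (Fin 2) ℝ).sum_repr y]
  rw [map_sum]
  simp [EuclideanSpace.basisFun_apply, EuclideanSpace.basisFun_repr, smul_eq_mul]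

lemma trace_clm (f : E2 →L[ℝ] E2) :
    LinearMap.trace ℝ (EuclideanSpace ℝ (Fin 2)) (f : E2 →ₗ[ℝ] E2)
      = ∑ i, f (EuclideanSpace.single i 1) i := by
  rw [LinearMap.trace_eq_matrix_trace ℝ (EuclideanSpace.basisFun (Fin 2) ℝ).toBasis]
  simp [Matrix.trace, LinearMap.toMatrix_apply]

lemma fderiv_coord {T : E2 → E2} (hT : Differentiable ℝ T) (i : Fin 2) (x v : E2) :
    fderiv ℝ (fun y => T y i) x v = fderiv ℝ T x v i := by
  have h : (fun y => T y i) = ⇑(EuclideanSpace.proj (𝕜 := ℝ) i) ∘ T := rfl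
  rw [h, fderiv_comp x (EuclideanSpace.proj (𝕜 := ℝ) i).differentiableAt (hT x),
    ContinuousLinearMap.fderiv]
  rfl

end TangentialIBPAux

open TangentialIBPAux InnerProductSpace Function

/-- Integration-by-parts commutator identity underlying the tangential
regularity argument: for `u, w : ℝ² → ℝ` twice continuously differentiable and
`T : ℝ² → ℝ²` continuously differentiable with compact support,
`∫ ⟨∇(T·∇u), ∇w⟩ + ∫ ⟨∇u, ∇(T·∇w)⟩
  = ∫ (⟨DT ∇u, ∇w⟩ + ⟨DT ∇w, ∇u⟩ − (div T) ⟨∇u, ∇w⟩)`. -/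
theorem tangential_ibp_commutator_identity
    (u w : EuclideanSpace ℝ (Fin 2) → ℝ)
    (hu : ContDiff ℝ 2 u) (hw : ContDiff ℝ 2 w)
    (T : EuclideanSpace ℝ (Fin 2) → EuclideanSpace ℝ (Fin 2))
    (hT : ContDiff ℝ 1 T) (hTc : HasCompactSupport T) :
    (∫ x, ⟪gradient (fun x => ⟪T x, gradient u x⟫) x, gradient w x⟫) +
      (∫ x, ⟪gradient u x, gradient (fun x => ⟪T x, gradient w x⟫) x⟫) =
    ∫ x, (⟪fderiv ℝ T x (gradient u x), gradient w x⟫ +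
          ⟪fderiv ℝ T x (gradient w x), gradient u x⟫ -
          (LinearMap.trace ℝ (EuclideanSpace ℝ (Fin 2)) (fderiv ℝ T x : _ →ₗ[ℝ] _)) *
            ⟪gradient u x, gradient w x⟫) := by
  classical
  have hu1 : ContDiff ℝ 1 (gradient u) := contDiff_gradient hu
  have hw1 : ContDiff ℝ 1 (gradient w) := contDiff_gradient hw
  have hud : Differentiable ℝ (gradient u) := hu1.differentiable one_ne_zero
  have hwd : Differentiable ℝ (gradient w) := hw1.differentiable one_ne_zero
  have hTd : Differentiable ℝ T := hT.differentiable one_ne_zero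
  set g : EuclideanSpace ℝ (Fin 2) → ℝ := fun x => ⟪gradient u x, gradient w x⟫ with hg_def
  have hg : ContDiff ℝ 1 g := hu1.inner ℝ hw1
  have hgd : Differentiable ℝ g := hg.differentiable one_ne_zero
  set tr : EuclideanSpace ℝ (Fin 2) → ℝ := fun x =>
    LinearMap.trace ℝ (EuclideanSpace ℝ (Fin 2)) (fderiv ℝ T x : _ →ₗ[ℝ] _) with htr_def
  set A : EuclideanSpace ℝ (Fin 2) → ℝ :=
    fun x => ⟪gradient (fun x => ⟪T x, gradient u x⟫) x, gradient w x⟫ with hA_def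
  set B : EuclideanSpace ℝ (Fin 2) → ℝ :=
    fun x => ⟪gradient u x, gradient (fun x => ⟪T x, gradient w x⟫) x⟫ with hB_def
  set C : EuclideanSpace ℝ (Fin 2) → ℝ :=
    fun x => ⟪fderiv ℝ T x (gradient u x), gradient w x⟫ +
          ⟪fderiv ℝ T x (gradient w x), gradient u x⟫ - tr x * g x with hC_def
  set D : EuclideanSpace ℝ (Fin 2) → ℝ :=
    fun x => fderiv ℝ g x (T x) + tr x * g x with hD_def
  -- pointwise identity
  have hkey : ∀ x, A x + B x = C x + D x := by
    intro x
    have hA : A x = ⟪fderiv ℝ T x (gradient w x), gradient u x⟫ +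
        ⟪T x, fderiv ℝ (gradient u) x (gradient w x)⟫ := by
      simp only [hA_def]
      rw [inner_gradient, fderiv_inner_apply ℝ (hTd x) (hud x)]
      ring
    have hB : B x = ⟪fderiv ℝ T x (gradient u x), gradient w x⟫ +
        ⟪T x, fderiv ℝ (gradient w) x (gradient u x)⟫ := by
      simp only [hB_def]
      rw [real_inner_comm, inner_gradient, fderiv_inner_apply ℝ (hTd x) (hwd x)]
      ring
    have hDg : fderiv ℝ g x (T x) = ⟪T x, fderiv ℝ (gradient u) x (gradient w x)⟫ +
        ⟪T x, fderiv ℝ (gradient w) x (gradient u x)⟫ := by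
      simp only [hg_def]
      rw [fderiv_inner_apply ℝ (hud x) (hwd x)]
      have h1 : ⟪fderiv ℝ (gradient u) x (T x), gradient w x⟫ =
          ⟪T x, fderiv ℝ (gradient u) x (gradient w x)⟫ := by
        rw [symm_second hu x (T x) (gradient w x), real_inner_comm]
      have h2 : ⟪gradient u x, fderiv ℝ (gradient w) x (T x)⟫ =
          ⟪T x, fderiv ℝ (gradient w) x (gradient u x)⟫ := by
        rw [real_inner_comm, symm_second hw x (T x) (gradient u x), real_inner_comm]
      rw [h1, h2]
      ring
    rw [hA, hB]
    simp only [hC_def, hD_def]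
    rw [hDg]
    ring
  -- support and vanishing
  have hT0 : ∀ x ∉ tsupport T, T x = 0 := fun x hx => image_eq_zero_of_notMem_tsupport hx
  have hfT0 : ∀ x ∉ tsupport T, fderiv ℝ T x = 0 := fun x hx =>
    fderiv_of_notMem_tsupport (𝕜 := ℝ) hx
  have htr0 : ∀ x ∉ tsupport T, tr x = 0 := by
    intro x hx; simp only [htr_def]; rw [hfT0 x hx]; simp
  have hgrad0 : ∀ (f : EuclideanSpace ℝ (Fin 2) → EuclideanSpace ℝ (Fin 2)), ∀ x ∉ tsupport T,
      gradient (fun y => ⟪T y, f y⟫) x = 0 := by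
    intro f x hx
    have hsub : tsupport (fun y => ⟪T y, f y⟫) ⊆ tsupport T := by
      apply closure_minimal _ (isClosed_closure)
      intro y hy
      by_contra hyt
      refine hy ?_
      show ⟪T y, f y⟫ = 0
      rw [hT0 y hyt, inner_zero_left]
    have : fderiv ℝ (fun y => ⟪T y, f y⟫) x = 0 :=
      fderiv_of_notMem_tsupport (𝕜 := ℝ) (fun h => hx (hsub h))
    show (toDual ℝ (EuclideanSpace ℝ (Fin 2))).symm _ = 0
    rw [this, map_zero]
  -- continuity of fderivs
  have hfT_cont : Continuous (fun x => fderiv ℝ T x) :=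
    (hT.fderiv_right (m := 0) (by norm_num)).continuous
  have hfg_cont : Continuous (fun x => fderiv ℝ g x) :=
    (hg.fderiv_right (m := 0) (by norm_num)).continuous
  have htr_cont : Continuous tr := by
    simp only [htr_def, trace_clm]
    exact continuous_finset_sum _ fun i _ =>
      (EuclideanSpace.proj (𝕜 := ℝ) i).continuous.comp
        (hfT_cont.clm_apply continuous_const)
  -- integrability
  have hint : ∀ (f : EuclideanSpace ℝ (Fin 2) → ℝ), Continuous f →
      (∀ x ∉ tsupport T, f x = 0) → Integrable f := by
    intro f hfc hf0
    exact hfc.integrable_of_hasCompactSupport (HasCompactSupport.intro hTc hf0)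
  have hAi : Integrable A := by
    refine hint _ ?_ ?_
    · exact ((continuous_gradient (hT.inner ℝ hu1))).inner hw1.continuous
    · intro x hx
      simp only [hA_def]
      rw [hgrad0 (gradient u) x hx, inner_zero_left]
  have hBi : Integrable B := by
    refine hint _ ?_ ?_
    · exact hu1.continuous.inner (continuous_gradient (hT.inner ℝ hw1))
    · intro x hx
      simp only [hB_def]
      rw [hgrad0 (gradient w) x hx, inner_zero_right]
  have hCi : Integrable C := by
    refine hint _ ?_ ?_
    · exact ((hfT_cont.clm_apply hu1.continuous).inner hw1.continuous).add
        ((hfT_cont.clm_apply hw1.continuous).inner hu1.continuous) |>.sub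
        (htr_cont.mul (hu1.continuous.inner hw1.continuous))
    · intro x hx
      simp only [hC_def]
      rw [hfT0 x hx, htr0 x hx]
      simp
  have hDi : Integrable D := by
    refine hint _ ?_ ?_
    · exact ((hfg_cont.clm_apply hT.continuous)).add
        (htr_cont.mul (hu1.continuous.inner hw1.continuous))
    · intro x hx
      simp only [hD_def]
      rw [hT0 x hx, htr0 x hx]
      simp
  -- ∫ D = 0
  have hDzero : (∫ x, D x) = 0 := by
    have hDeq : ∀ x, D x = ∑ i, (T x i * fderiv ℝ g x (EuclideanSpace.single i 1)
        + fderiv ℝ (fun y => T y i) x (EuclideanSpace.single i 1) * g x) := by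
      intro x
      simp only [hD_def]
      rw [Finset.sum_add_distrib, ← clm_apply_eq_sum (fderiv ℝ g x) (T x)]
      congr 1
      simp only [htr_def, trace_clm]
      rw [Finset.sum_mul]
      congr 1
      funext i
      rw [fderiv_coord hTd]
    have hTi0 : ∀ (i : Fin 2) (x), x ∉ tsupport T → T x i = 0 := by
      intro i x hx; rw [hT0 x hx]; rfl
    have hTci : ∀ i : Fin 2, Continuous (fun x => T x i) := fun i =>
      (EuclideanSpace.proj (𝕜 := ℝ) i).continuous.comp hT.continuous
    have hfgi_cont : ∀ v : EuclideanSpace ℝ (Fin 2),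
        Continuous (fun x => fderiv ℝ g x v) := fun v =>
      hfg_cont.clm_apply continuous_const
    have hI1 : ∀ i : Fin 2, Integrable (fun x =>
        T x i * fderiv ℝ g x (EuclideanSpace.single i 1)) := by
      intro i
      refine hint _ ?_ ?_
      · exact (hTci i).mul (hfgi_cont _)
      · intro x hx; simp [hTi0 i x hx]
    have hI2 : ∀ i : Fin 2, Integrable (fun x =>
        fderiv ℝ (fun y => T y i) x (EuclideanSpace.single i 1) * g x) := by
      intro i
      rw [show (fun x => fderiv ℝ (fun y => T y i) x (EuclideanSpace.single i 1) * g x)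
        = fun x => fderiv ℝ T x (EuclideanSpace.single i 1) i * g x by
          funext x; rw [fderiv_coord hTd]]
      refine hint _ ?_ ?_
      · exact ((EuclideanSpace.proj (𝕜 := ℝ) i).continuous.comp
          (hfT_cont.clm_apply continuous_const)).mul (hu1.continuous.inner hw1.continuous)
      · intro x hx; simp [hfT0 x hx]
    have hI3 : ∀ i : Fin 2, Integrable (fun x => T x i * g x) := by
      intro i
      refine hint _ ?_ ?_
      · exact (hTci i).mul (hu1.continuous.inner hw1.continuous)
      · intro x hx; simp [hTi0 i x hx]
    calc (∫ x, D x) = ∫ x, ∑ i, (T x i * fderiv ℝ g x (EuclideanSpace.single i 1)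
        + fderiv ℝ (fun y => T y i) x (EuclideanSpace.single i 1) * g x) := by
          simp_rw [hDeq]
      _ = ∑ i, ∫ x, (T x i * fderiv ℝ g x (EuclideanSpace.single i 1)
        + fderiv ℝ (fun y => T y i) x (EuclideanSpace.single i 1) * g x) :=
          integral_finset_sum _ (fun i _ => (hI1 i).add (hI2 i))
      _ = 0 := by
        apply Finset.sum_eq_zero
        intro i _
        rw [integral_add (hI1 i) (hI2 i)]
        have := integral_mul_fderiv_eq_neg_fderiv_mul_of_integrable
          (μ := (volume : Measure (EuclideanSpace ℝ (Fin 2))))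
          (f := fun y => T y i) (g := g) (v := EuclideanSpace.single i 1)
          (hI2 i) (hI1 i) (hI3 i)
          (fun x _ => (EuclideanSpace.proj (𝕜 := ℝ) i).differentiable.comp hTd x) (fun x _ => hgd x)
        rw [this]
        ring
  calc (∫ x, A x) + (∫ x, B x) = ∫ x, (A x + B x) := (integral_add hAi hBi).symm
    _ = ∫ x, (C x + D x) := by simp_rw [hkey]
    _ = (∫ x, C x) + ∫ x, D x := integral_add hCi hDi
    _ = ∫ x, C x := by rw [hDzero, add_zero]
end
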